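/- Let a, b > 0, let v ∈ P₂ ⊕ span{y³}, and let g(x,y) = α + βx + γy be an affine polynomial. Set m_b = (1/a)·∫₀ᵃ v(x,0) dx and m_t = (1/a)·∫₀ᵃ v(x,b) dx. Then ∫₀ᵃ g(x,b)·(v(x,b) − m_t) dx − ∫₀ᵃ g(x,0)·(v(x,0) − m_b) dx = (a²β/12)·∫₀ᵃ∫₀ᵇ (∂²v/∂x∂y)(x,y) dy dx. (This is the identity J₁,K(u₁,v) = J′₁,K(u₁,v) for all u₁ with ∂u₁/∂y = g ∈ P₁.) -/

import Mathlib

open MvPolynomial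

/-- Membership in `P₂ ⊕ span{y³}`, the space of first components of the
vector-valued shape function space `V_K` of the Stokes element. -/
def memP2y3 (v : MvPolynomial (Fin 2) ℝ) : Prop :=
  ∃ (p : MvPolynomial (Fin 2) ℝ) (c : ℝ),
    p.totalDegree ≤ 2 ∧ v = p + C c * X 1 ^ 3

lemma contE (v : MvPolynomial (Fin 2) ℝ) :
    Continuous fun p : ℝ × ℝ => eval ![p.1, p.2] v := by
  apply (MvPolynomial.continuous_eval v).comp
  apply continuous_pi
  intro i
  fin_cases i
  · simpa using continuous_fst
  · simpa using continuous_snd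

lemma contX (v : MvPolynomial (Fin 2) ℝ) (y0 : ℝ) :
    Continuous fun x : ℝ => eval ![x, y0] v := by
  apply (MvPolynomial.continuous_eval v).comp
  apply continuous_pi
  intro i
  fin_cases i
  · simpa using continuous_id'
  · simpa using continuous_const

lemma contY (v : MvPolynomial (Fin 2) ℝ) (x0 : ℝ) :
    Continuous fun y : ℝ => eval ![x0, y] v := by
  apply (MvPolynomial.continuous_eval v).comp
  apply continuous_pi
  intro i
  fin_cases i
  · simpa using continuous_const
  · simpa using continuous_id'

lemma contII (v : MvPolynomial (Fin 2) ℝ) (b : ℝ) :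
    Continuous fun x : ℝ => ∫ y in (0:ℝ)..b, eval ![x, y] v := by
  apply intervalIntegral.continuous_parametric_intervalIntegral_of_continuous'
    (f := fun x y => eval ![x, y] v)
  exact contE v

open intervalIntegral in
lemma poly_int (a c0 c1 c2 : ℝ) :
    (∫ x in (0:ℝ)..a, (c0 + c1 * x + c2 * x ^ 2)) = c0 * a + c1 * a ^ 2 / 2 + c2 * a ^ 3 / 3 := by
  rw [integral_add, integral_add, integral_const, integral_const_mul,
    integral_const_mul, integral_id, integral_pow]
  · simp only [smul_eq_mul, sub_zero, zero_pow, Nat.cast_ofNat]; push_cast; ring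
  all_goals apply Continuous.intervalIntegrable; continuity

lemma eval_mono (d : Fin 2 →₀ ℕ) (r x y : ℝ) :
    eval ![x, y] (monomial d r) = r * (x ^ d 0 * y ^ d 1) := by
  rw [eval_monomial, Finsupp.prod_pow]
  simp [Fin.prod_univ_two]

lemma D_mono (d : Fin 2 →₀ ℕ) (r : ℝ) :
    pderiv 0 (pderiv 1 (monomial d r)) =
      monomial (d - Finsupp.single 1 1 - Finsupp.single 0 1) (r * d 1 * d 0) := by
  rw [pderiv_monomial, pderiv_monomial]
  congr 2
  simp [Finsupp.tsub_apply, Finsupp.single_apply]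

lemma eval_D_mono (d : Fin 2 →₀ ℕ) (r x y : ℝ) :
    eval ![x, y] (pderiv 0 (pderiv 1 (monomial d r))) =
      r * d 1 * d 0 * (x ^ (d 0 - 1) * y ^ (d 1 - 1)) := by
  rw [D_mono, eval_mono]
  congr 2 <;> simp [Finsupp.tsub_apply, Finsupp.single_apply]

def QQ (a b α β γ : ℝ) (v : MvPolynomial (Fin 2) ℝ) : Prop :=
  (∫ x in (0:ℝ)..a, (α + β * x + γ * b) *
      (eval ![x, b] v - (1 / a) * ∫ x in (0:ℝ)..a, eval ![x, b] v)) -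
  (∫ x in (0:ℝ)..a, (α + β * x + γ * 0) *
      (eval ![x, 0] v - (1 / a) * ∫ x in (0:ℝ)..a, eval ![x, 0] v)) =
  (a ^ 2 * β / 12) *
    ∫ x in (0:ℝ)..a, ∫ y in (0:ℝ)..b, eval ![x, y] (pderiv 0 (pderiv 1 v))

lemma QQ_zero (a b α β γ : ℝ) : QQ a b α β γ 0 := by
  simp [QQ]

lemma T_add (a α β γ y0 : ℝ) (v w : MvPolynomial (Fin 2) ℝ) :
    (∫ x in (0:ℝ)..a, (α + β * x + γ * y0) *
        (eval ![x, y0] (v + w) - (1 / a) * ∫ x in (0:ℝ)..a, eval ![x, y0] (v + w))) =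
    (∫ x in (0:ℝ)..a, (α + β * x + γ * y0) *
        (eval ![x, y0] v - (1 / a) * ∫ x in (0:ℝ)..a, eval ![x, y0] v)) +
    (∫ x in (0:ℝ)..a, (α + β * x + γ * y0) *
        (eval ![x, y0] w - (1 / a) * ∫ x in (0:ℝ)..a, eval ![x, y0] w)) := by
  have hg : Continuous fun x : ℝ => α + β * x + γ * y0 := by continuity
  have hI : (∫ x in (0:ℝ)..a, eval ![x, y0] (v + w))
      = (∫ x in (0:ℝ)..a, eval ![x, y0] v) + ∫ x in (0:ℝ)..a, eval ![x, y0] w := by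
    simp only [map_add]
    exact intervalIntegral.integral_add ((contX v y0).intervalIntegrable 0 a)
      ((contX w y0).intervalIntegrable 0 a)
  have hptw : ∀ x : ℝ, (α + β * x + γ * y0) *
      (eval ![x, y0] (v + w) - (1 / a) * ∫ x in (0:ℝ)..a, eval ![x, y0] (v + w))
      = (α + β * x + γ * y0) *
          (eval ![x, y0] v - (1 / a) * ∫ x in (0:ℝ)..a, eval ![x, y0] v)
        + (α + β * x + γ * y0) *
          (eval ![x, y0] w - (1 / a) * ∫ x in (0:ℝ)..a, eval ![x, y0] w) := by
    intro x
    rw [hI, map_add]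
    ring
  rw [intervalIntegral.integral_congr (g :=
      fun x => (α + β * x + γ * y0) *
          (eval ![x, y0] v - (1 / a) * ∫ x in (0:ℝ)..a, eval ![x, y0] v)
        + (α + β * x + γ * y0) *
          (eval ![x, y0] w - (1 / a) * ∫ x in (0:ℝ)..a, eval ![x, y0] w))
      (fun x _ => hptw x)]
  exact intervalIntegral.integral_add
    ((hg.mul ((contX v y0).sub continuous_const)).intervalIntegrable 0 a)
    ((hg.mul ((contX w y0).sub continuous_const)).intervalIntegrable 0 a)

lemma R_add (a b : ℝ) (v w : MvPolynomial (Fin 2) ℝ) :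
    (∫ x in (0:ℝ)..a, ∫ y in (0:ℝ)..b, eval ![x, y] (pderiv 0 (pderiv 1 (v + w)))) =
    (∫ x in (0:ℝ)..a, ∫ y in (0:ℝ)..b, eval ![x, y] (pderiv 0 (pderiv 1 v))) +
    (∫ x in (0:ℝ)..a, ∫ y in (0:ℝ)..b, eval ![x, y] (pderiv 0 (pderiv 1 w))) := by
  have h1 : pderiv 0 (pderiv 1 (v + w)) = pderiv 0 (pderiv 1 v) + pderiv 0 (pderiv 1 w) := by
    rw [map_add, map_add]
  rw [h1]
  have hinner : ∀ x : ℝ, (∫ y in (0:ℝ)..b, eval ![x, y] (pderiv 0 (pderiv 1 v) + pderiv 0 (pderiv 1 w)))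
      = (∫ y in (0:ℝ)..b, eval ![x, y] (pderiv 0 (pderiv 1 v)))
        + ∫ y in (0:ℝ)..b, eval ![x, y] (pderiv 0 (pderiv 1 w)) := by
    intro x
    simp only [map_add]
    exact intervalIntegral.integral_add ((contY _ x).intervalIntegrable 0 b)
      ((contY _ x).intervalIntegrable 0 b)
  simp only [hinner]
  exact intervalIntegral.integral_add ((contII _ b).intervalIntegrable 0 a)
    ((contII _ b).intervalIntegrable 0 a)

lemma QQ_add {a b α β γ : ℝ} {v w : MvPolynomial (Fin 2) ℝ}
    (hv : QQ a b α β γ v) (hw : QQ a b α β γ w) : QQ a b α β γ (v + w) := by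
  unfold QQ at *
  rw [T_add, T_add, R_add, mul_add]
  linarith

lemma T_eval_const (a α β γ y0 : ℝ) (ha : a ≠ 0) (v : MvPolynomial (Fin 2) ℝ) (c : ℝ)
    (h : ∀ x : ℝ, eval ![x, y0] v = c) :
    (∫ x in (0:ℝ)..a, (α + β * x + γ * y0) *
      (eval ![x, y0] v - (1 / a) * ∫ x in (0:ℝ)..a, eval ![x, y0] v)) = 0 := by
  simp only [h]
  rw [intervalIntegral.integral_const]
  have h2 : c - 1 / a * ((a - 0) • c) = 0 := by
    simp only [smul_eq_mul, sub_zero]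
    field_simp
    ring
  simp only [h2, mul_zero]
  exact intervalIntegral.integral_zero

lemma QQ_mono (a b α β γ : ℝ) (ha : a ≠ 0) (d : Fin 2 →₀ ℕ) (r : ℝ)
    (hd : d 0 = 0 ∨ d 1 = 0 ∨ (d 0 = 1 ∧ d 1 = 1)) : QQ a b α β γ (monomial d r) := by
  unfold QQ
  rcases hd with h0 | h1 | ⟨h0, h1⟩
  · -- d 0 = 0 : v constant in x
    rw [T_eval_const a α β γ b ha _ (r * b ^ d 1)
        (fun x => by rw [eval_mono, h0, pow_zero, one_mul]),
      T_eval_const a α β γ 0 ha _ (r * (0:ℝ) ^ d 1)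
        (fun x => by rw [eval_mono, h0, pow_zero, one_mul])]
    simp [eval_D_mono, h0]
  · -- d 1 = 0 : v independent of y
    have hev : ∀ (y0 x : ℝ), eval ![x, y0] (monomial d r) = r * x ^ d 0 := by
      intro y0 x; rw [eval_mono, h1, pow_zero, mul_one]
    simp only [hev]
    set I := ∫ x in (0:ℝ)..a, r * x ^ d 0 with hI
    have hIi : IntervalIntegrable (fun x : ℝ => r * x ^ d 0) MeasureTheory.volume 0 a := by
      apply Continuous.intervalIntegrable; continuity
    have hg : ∀ y0 : ℝ, IntervalIntegrable
        (fun x : ℝ => (α + β * x + γ * y0) * (r * x ^ d 0 - 1 / a * I))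
        MeasureTheory.volume 0 a := by
      intro y0; apply Continuous.intervalIntegrable; continuity
    rw [← intervalIntegral.integral_sub (hg b) (hg 0)]
    rw [intervalIntegral.integral_congr (g := fun x : ℝ => γ * b * (r * x ^ d 0 - 1 / a * I))
        (fun x _ => by ring)]
    rw [intervalIntegral.integral_const_mul,
      intervalIntegral.integral_sub hIi intervalIntegrable_const,
      intervalIntegral.integral_const]
    have hR0 : (∫ x in (0:ℝ)..a, ∫ y in (0:ℝ)..b,
        eval ![x, y] (pderiv 0 (pderiv 1 (monomial d r)))) = 0 := by
      have hz : ∀ x y : ℝ, eval ![x, y] (pderiv 0 (pderiv 1 (monomial d r))) = 0 := by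
        intro x y; rw [eval_D_mono, h1]; norm_num
      simp only [hz]
      simp
    rw [hR0, mul_zero]
    simp only [smul_eq_mul, sub_zero]
    have ha' : a * (1 / a * I) = I := by field_simp
    rw [ha', sub_self, mul_zero]
  · -- d 0 = 1, d 1 = 1
    have hevb : ∀ x : ℝ, eval ![x, b] (monomial d r) = r * b * x := by
      intro x; rw [eval_mono, h0, h1]; ring
    have hev0 : ∀ x : ℝ, eval ![x, 0] (monomial d r) = 0 := by
      intro x; rw [eval_mono, h0, h1]; ring
    rw [T_eval_const a α β γ 0 ha _ 0 hev0]
    simp only [hevb]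
    have hI : (∫ x in (0:ℝ)..a, r * b * x) = r * b * a ^ 2 / 2 := by
      rw [intervalIntegral.integral_congr
          (g := fun x : ℝ => (0:ℝ) + (r * b) * x + 0 * x ^ 2) (fun x _ => by ring),
        poly_int]
      ring
    rw [hI]
    set m : ℝ := 1 / a * (r * b * a ^ 2 / 2) with hm
    rw [intervalIntegral.integral_congr
        (g := fun x : ℝ => (-(α + γ * b) * m) + ((α + γ * b) * (r * b) - β * m) * x
          + (β * (r * b)) * x ^ 2) (fun x _ => by ring),
      poly_int]
    have hRHS : (∫ x in (0:ℝ)..a, ∫ y in (0:ℝ)..b,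
        eval ![x, y] (pderiv 0 (pderiv 1 (monomial d r)))) = a * b * r := by
      have : ∀ x y : ℝ, eval ![x, y] (pderiv 0 (pderiv 1 (monomial d r))) = r := by
        intro x y; rw [eval_D_mono, h0, h1]; norm_num
      simp only [this]
      simp [intervalIntegral.integral_const, smul_eq_mul]
      ring
    rw [hRHS, hm]
    field_simp
    ring

/-- the identity `J₁,K(u₁,v) = J′₁,K(u₁,v)` for all `u₁` with
`∂u₁/∂y = g = α + βx + γy ∈ P₁`, for `v ∈ P₂ ⊕ span{y³}` on `K = [0,a] × [0,b]`. -/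
theorem stmt13 (a b : ℝ) (ha : 0 < a) (hb : 0 < b)
    (v : MvPolynomial (Fin 2) ℝ) (hv : memP2y3 v)
    (α β γ : ℝ)
    (mb mt : ℝ)
    (hmb : mb = (1 / a) * ∫ x in (0:ℝ)..a, eval ![x, 0] v)
    (hmt : mt = (1 / a) * ∫ x in (0:ℝ)..a, eval ![x, b] v) :
    (∫ x in (0:ℝ)..a, (α + β * x + γ * b) * (eval ![x, b] v - mt)) -
      (∫ x in (0:ℝ)..a, (α + β * x + γ * 0) * (eval ![x, 0] v - mb)) =
    (a ^ 2 * β / 12) *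
      ∫ x in (0:ℝ)..a, ∫ y in (0:ℝ)..b, eval ![x, y] (pderiv 0 (pderiv 1 v)) := by
  subst hmb hmt
  have ha' : a ≠ 0 := ne_of_gt ha
  obtain ⟨p, c, hdeg, rfl⟩ := hv
  have key : QQ a b α β γ (p + C c * X 1 ^ 3) := by
    apply QQ_add
    · -- QQ p
      have hsupp : ∀ d ∈ p.support, d 0 = 0 ∨ d 1 = 0 ∨ (d 0 = 1 ∧ d 1 = 1) := by
        intro d hd
        have h1 : (d.sum fun _ e => e) ≤ 2 := le_trans (MvPolynomial.le_totalDegree hd) hdeg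
        have h2 : (d.sum fun _ e => e) = d 0 + d 1 := by
          rw [Finsupp.sum_fintype _ _ (fun _ => rfl)]
          exact Fin.sum_univ_two _
        omega
      rw [MvPolynomial.as_sum p]
      exact Finset.sum_induction _ (QQ a b α β γ) (fun _ _ h1 h2 => QQ_add h1 h2)
        (QQ_zero a b α β γ) (fun d hd => QQ_mono a b α β γ ha' d _ (hsupp d hd))
    · -- QQ (C c * X 1 ^ 3)
      have h : (C c * X 1 ^ 3 : MvPolynomial (Fin 2) ℝ) = monomial (Finsupp.single 1 3) c := by
        rw [X_pow_eq_monomial, C_mul_monomial, mul_one]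
      rw [h]
      exact QQ_mono a b α β γ ha' _ _ (Or.inl (by simp))
  exact key
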